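/- Let H be a complex Hilbert space, A a bounded self-adjoint operator on H, and λ₀ ≤ 0 a real number with Re⟨Au,u⟩ ≥ λ₀‖u‖² for all u ∈ H. Let J and J' be bounded self-adjoint operators on H with 0 ≤ Re⟨Ju,u⟩ ≤ ‖u‖² for all u, and J∘J + J'∘J' = 1. Let γ ≥ 0 satisfy ‖[J,[J,A]]‖ ≤ γ and ‖[J',[J',A]]‖ ≤ γ, and let α > 0 satisfy Re⟨A(J'u),J'u⟩ ≥ α‖J'u‖² for all u ∈ H. Let E be an orthogonal projection on H such that Re⟨A(Eu),Eu⟩ ≤ λ‖Eu‖² for all u ∈ H, where λ is a real number. If α > λ + γ, then for every u ∈ H one has Re⟨A(J(Eu)), J(Eu)⟩ ≤ (λ + γ − λ₀·(λ+γ−λ₀)/(α−λ₀))·‖Eu‖². -/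

import Mathlib

/-- **Localization estimate for spectral projections** (Proposition on localization).
If `A` is self-adjoint with `Re⟨Au,u⟩ ≥ λ₀‖u‖²`, `J, J'` are self-adjoint with
`0 ≤ Re⟨Ju,u⟩ ≤ ‖u‖²` and `J² + J'² = 1`, the double commutators `[J,[J,A]]` and
`[J',[J',A]]` have norm at most `γ`, `Re⟨A J'u, J'u⟩ ≥ α‖J'u‖²`, and `E` is an orthogonal
projection with `Re⟨A Eu, Eu⟩ ≤ λ‖Eu‖²`, then `α > λ + γ` implies
`Re⟨A(J(Eu)), J(Eu)⟩ ≤ (λ+γ−λ₀(λ+γ−λ₀)/(α−λ₀))‖Eu‖²` for all `u`. -/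
theorem localization_energy_bound {H : Type*} [NormedAddCommGroup H]
    [InnerProductSpace ℂ H] [CompleteSpace H]
    (A J J' E : H →L[ℂ] H)
    (hA : IsSelfAdjoint A)
    (lam₀ : ℝ) (hlam₀ : lam₀ ≤ 0)
    (hAlow : ∀ u : H, lam₀ * ‖u‖ ^ 2 ≤ (inner ℂ (A u) u : ℂ).re)
    (hJ : IsSelfAdjoint J) (hJ' : IsSelfAdjoint J')
    (hJ0 : ∀ u : H, 0 ≤ (inner ℂ (J u) u : ℂ).re)
    (hJ1 : ∀ u : H, (inner ℂ (J u) u : ℂ).re ≤ ‖u‖ ^ 2)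
    (hJJ' : J * J + J' * J' = 1)
    (γ : ℝ) (hγ : 0 ≤ γ)
    (hcommJ : ‖⁅J, ⁅J, A⁆⁆‖ ≤ γ) (hcommJ' : ‖⁅J', ⁅J', A⁆⁆‖ ≤ γ)
    (α : ℝ) (hα : 0 < α)
    (hAJ' : ∀ u : H, α * ‖J' u‖ ^ 2 ≤ (inner ℂ (A (J' u)) (J' u) : ℂ).re)
    (hEproj : E * E = E) (hEsa : IsSelfAdjoint E)
    (lam : ℝ)
    (hAE : ∀ u : H, (inner ℂ (A (E u)) (E u) : ℂ).re ≤ lam * ‖E u‖ ^ 2)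
    (hgap : α > lam + γ) :
    ∀ u : H, (inner ℂ (A (J (E u))) (J (E u)) : ℂ).re ≤
      (lam + γ - lam₀ * ((lam + γ - lam₀) / (α - lam₀))) * ‖E u‖ ^ 2 := by
  intro u
  set v := E u with hv
  by_cases hv0 : v = 0
  · simp [hv0]
  -- λ₀ ≤ λ
  have hvpos : (0:ℝ) < ‖v‖ ^ 2 := pow_pos (norm_pos_iff.mpr hv0) 2
  have hlamge : lam₀ ≤ lam := by
    have h1 := hAlow v
    have h2 := hAE u
    rw [← hv] at h2
    nlinarith
  -- IMS operator identity
  have key : ⁅J, ⁅J, A⁆⁆ + ⁅J', ⁅J', A⁆⁆ = 2 • A - 2 • (J*A*J + J'*A*J') := by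
    have h : ⁅J, ⁅J, A⁆⁆ + ⁅J', ⁅J', A⁆⁆
        = (J*J + J'*J')*A + A*(J*J+J'*J') - 2 • (J*A*J + J'*A*J') := by
      simp only [Ring.lie_def]; noncomm_ring
    rw [h, hJJ']; noncomm_ring
  -- selfadjointness moves J across inner
  have hJin : ∀ x y : H, (inner ℂ (J x) y : ℂ) = inner ℂ x (J y) := fun x y => by
    rw [← ContinuousLinearMap.adjoint_inner_left, hJ.adjoint_eq]
  have hJ'in : ∀ x y : H, (inner ℂ (J' x) y : ℂ) = inner ℂ x (J' y) := fun x y => by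
    rw [← ContinuousLinearMap.adjoint_inner_left, hJ'.adjoint_eq]
  set p : ℝ := (inner ℂ (A (J v)) (J v) : ℂ).re with hp
  set q : ℝ := (inner ℂ (A (J' v)) (J' v) : ℂ).re with hq
  set a : ℝ := (inner ℂ (A v) v : ℂ).re with ha
  set c1 : ℝ := (inner ℂ (⁅J, ⁅J, A⁆⁆ v) v : ℂ).re with hc1
  set c2 : ℝ := (inner ℂ (⁅J', ⁅J', A⁆⁆ v) v : ℂ).re with hc2
  -- pointwise IMS identity on real parts
  have hpq : c1 + c2 = 2 * a - 2 * (p + q) := by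
    have happ : ((⁅J, ⁅J, A⁆⁆ + ⁅J', ⁅J', A⁆⁆) v)
        = ((2 • A - 2 • (J*A*J + J'*A*J')) v) := by rw [key]
    have h2 : (inner ℂ ((⁅J, ⁅J, A⁆⁆ + ⁅J', ⁅J', A⁆⁆) v) v : ℂ).re
        = (inner ℂ ((2 • A - 2 • (J*A*J + J'*A*J')) v) v : ℂ).re := by rw [happ]
    simp only [ContinuousLinearMap.add_apply, ContinuousLinearMap.sub_apply,
      ContinuousLinearMap.smul_apply, ContinuousLinearMap.mul_apply, two_nsmul,
      inner_add_left, inner_sub_left] at h2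
    rw [hJin (A (J v)) v, hJ'in (A (J' v)) v] at h2
    simp only [Complex.add_re, Complex.sub_re] at h2
    rw [hc1, hc2, ha, hp, hq]
    linarith [h2]
  -- commutator bounds
  have hb1 : -(γ * ‖v‖^2) ≤ c1 := by
    have := norm_inner_le_norm (𝕜 := ℂ) ((⁅J, ⁅J, A⁆⁆) v) v
    have hop := (⁅J, ⁅J, A⁆⁆).le_opNorm v
    have habs : |c1| ≤ ‖(inner ℂ ((⁅J, ⁅J, A⁆⁆) v) v : ℂ)‖ := Complex.abs_re_le_norm _
    have h3 : ‖(inner ℂ ((⁅J, ⁅J, A⁆⁆) v) v : ℂ)‖ ≤ γ * ‖v‖^2 := by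
      calc ‖(inner ℂ ((⁅J, ⁅J, A⁆⁆) v) v : ℂ)‖ ≤ ‖(⁅J, ⁅J, A⁆⁆) v‖ * ‖v‖ := this
        _ ≤ (γ * ‖v‖) * ‖v‖ := by
            have : ‖(⁅J, ⁅J, A⁆⁆) v‖ ≤ γ * ‖v‖ :=
              hop.trans (by gcongr)
            gcongr
        _ = γ * ‖v‖^2 := by ring
    cases abs_le.mp (habs.trans h3) with | intro h _ => linarith
  have hb2 : -(γ * ‖v‖^2) ≤ c2 := by
    have := norm_inner_le_norm (𝕜 := ℂ) ((⁅J', ⁅J', A⁆⁆) v) v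
    have hop := (⁅J', ⁅J', A⁆⁆).le_opNorm v
    have habs : |c2| ≤ ‖(inner ℂ ((⁅J', ⁅J', A⁆⁆) v) v : ℂ)‖ := Complex.abs_re_le_norm _
    have h3 : ‖(inner ℂ ((⁅J', ⁅J', A⁆⁆) v) v : ℂ)‖ ≤ γ * ‖v‖^2 := by
      calc ‖(inner ℂ ((⁅J', ⁅J', A⁆⁆) v) v : ℂ)‖ ≤ ‖(⁅J', ⁅J', A⁆⁆) v‖ * ‖v‖ := this
        _ ≤ (γ * ‖v‖) * ‖v‖ := by
            have : ‖(⁅J', ⁅J', A⁆⁆) v‖ ≤ γ * ‖v‖ :=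
              hop.trans (by gcongr)
            gcongr
        _ = γ * ‖v‖^2 := by ring
    cases abs_le.mp (habs.trans h3) with | intro h _ => linarith
  -- q ≥ 0
  have hq0 : 0 ≤ q := le_trans (by positivity) (hAJ' v)
  have haup : a ≤ lam * ‖v‖^2 := by have := hAE u; rw [← hv] at this; exact this
  -- p ≤ (λ+γ)‖v‖²
  have hple : p ≤ (lam + γ) * ‖v‖^2 := by nlinarith
  -- RHS bigger
  have hs : 0 ≤ (lam + γ - lam₀) / (α - lam₀) := by
    apply div_nonneg <;> linarith
  have : lam + γ ≤ lam + γ - lam₀ * ((lam + γ - lam₀) / (α - lam₀)) := by nlinarith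
  calc p ≤ (lam + γ) * ‖v‖^2 := hple
    _ ≤ (lam + γ - lam₀ * ((lam + γ - lam₀) / (α - lam₀))) * ‖v‖^2 := by nlinarith
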